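/- For all m, n ∈ ℕ, all z ∈ ℂ and ρ ∈ ℝ, the complex Hermite polynomial J_{m,n}(·,ρ) is an eigenfunction of the complex Ornstein–Uhlenbeck operator: z · (∂/∂z) J_{m,n}(z,ρ) − ρ · (∂/∂z)(∂/∂z̄) J_{m,n}(z,ρ) = m · J_{m,n}(z,ρ). -/

import Mathlib

open MeasureTheory ProbabilityTheory Complex Finset

/-- Itô's complex Hermite polynomial `J_{m,n}(z, ρ)`. -/
noncomputable def complexHermite (m n : ℕ) (z : ℂ) (ρ : ℝ) : ℂ :=
  ∑ k ∈ Finset.range (min m n + 1),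
    (-1 : ℂ) ^ k * (Nat.factorial k : ℂ) * (Nat.choose m k : ℂ) * (Nat.choose n k : ℂ) *
      (ρ : ℂ) ^ k * z ^ (m - k) * (starRingEnd ℂ z) ^ (n - k)

/-- Wirtinger derivative `∂f/∂z = (1/2)(∂f/∂x − i ∂f/∂y)`. -/
noncomputable def wirtingerDeriv (f : ℂ → ℂ) (z : ℂ) : ℂ :=
  (fderiv ℝ f z 1 - Complex.I * fderiv ℝ f z Complex.I) / 2

/-- Conjugate Wirtinger derivative `∂f/∂z̄ = (1/2)(∂f/∂x + i ∂f/∂y)`. -/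
noncomputable def wirtingerDerivBar (f : ℂ → ℂ) (z : ℂ) : ℂ :=
  (fderiv ℝ f z 1 + Complex.I * fderiv ℝ f z Complex.I) / 2

/- ### Auxiliary lemmas -/

noncomputable def monoL (a b : ℕ) (z : ℂ) : ℂ →L[ℝ] ℂ :=
  ((a : ℂ) * z ^ (a - 1) * (starRingEnd ℂ z) ^ b) • (ContinuousLinearMap.id ℝ ℂ)
    + ((b : ℂ) * z ^ a * (starRingEnd ℂ z) ^ (b - 1)) • (Complex.conjCLE.toContinuousLinearMap)

lemma monoL_apply (a b : ℕ) (z v : ℂ) :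
    monoL a b z v = (a : ℂ) * z ^ (a - 1) * (starRingEnd ℂ z) ^ b * v
      + (b : ℂ) * z ^ a * (starRingEnd ℂ z) ^ (b - 1) * starRingEnd ℂ v := by
  simp [monoL, smul_eq_mul]

lemma mono_hasFDerivAt (a b : ℕ) (z : ℂ) :
    HasFDerivAt (fun w : ℂ => w ^ a * (starRingEnd ℂ w) ^ b) (monoL a b z) z := by
  have h1 : HasFDerivAt (fun w : ℂ => w ^ a)
      (((a : ℂ) * z ^ (a - 1)) • (ContinuousLinearMap.id ℝ ℂ)) z := by
    have := (hasDerivAt_pow a z).hasFDerivAt.restrictScalars ℝ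
    refine this.congr_fderiv ?_
    ext v
    simp [smul_eq_mul, mul_comm]
  have h2 : HasFDerivAt (fun w : ℂ => (starRingEnd ℂ w) ^ b)
      (((b : ℂ) * (starRingEnd ℂ z) ^ (b - 1)) • (Complex.conjCLE.toContinuousLinearMap)) z := by
    have hp := (hasDerivAt_pow b (starRingEnd ℂ z)).hasFDerivAt.restrictScalars ℝ
    have hc : HasFDerivAt (fun w : ℂ => starRingEnd ℂ w)
        (Complex.conjCLE.toContinuousLinearMap) z :=
      Complex.conjCLE.toContinuousLinearMap.hasFDerivAt
    have := hp.comp z hc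
    refine this.congr_fderiv ?_
    ext v
    simp [smul_eq_mul, mul_comm]
  have := h1.mul h2
  refine this.congr_fderiv ?_
  ext v
  simp [monoL, smul_eq_mul]
  ring

lemma sum_hasFDerivAt (s : Finset ℕ) (c : ℕ → ℂ) (a b : ℕ → ℕ) (z : ℂ) :
    HasFDerivAt (fun w : ℂ => ∑ k ∈ s, c k * (w ^ a k * (starRingEnd ℂ w) ^ b k))
      (∑ k ∈ s, c k • monoL (a k) (b k) z) z :=
  HasFDerivAt.fun_sum fun k _ => (mono_hasFDerivAt (a k) (b k) z).const_mul (c k)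

lemma fderiv_sum_apply' (s : Finset ℕ) (c : ℕ → ℂ) (a b : ℕ → ℕ) (z v : ℂ) :
    fderiv ℝ (fun w : ℂ => ∑ k ∈ s, c k * (w ^ a k * (starRingEnd ℂ w) ^ b k)) z v
      = ∑ k ∈ s, c k * ((a k : ℂ) * z ^ (a k - 1) * (starRingEnd ℂ z) ^ b k * v
          + (b k : ℂ) * z ^ a k * (starRingEnd ℂ z) ^ (b k - 1) * starRingEnd ℂ v) := by
  rw [(sum_hasFDerivAt s c a b z).fderiv]
  simp [monoL_apply, smul_eq_mul]

lemma wirtingerDeriv_sum (s : Finset ℕ) (c : ℕ → ℂ) (a b : ℕ → ℕ) (z : ℂ) :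
    wirtingerDeriv (fun w : ℂ => ∑ k ∈ s, c k * (w ^ a k * (starRingEnd ℂ w) ^ b k)) z
      = ∑ k ∈ s, c k * ((a k : ℂ) * z ^ (a k - 1) * (starRingEnd ℂ z) ^ b k) := by
  unfold wirtingerDeriv
  rw [fderiv_sum_apply', fderiv_sum_apply', Finset.mul_sum, ← Finset.sum_sub_distrib,
    Finset.sum_div]
  refine Finset.sum_congr rfl fun k _ => ?_
  simp only [Complex.conj_I, map_one]
  set A := (a k : ℂ) * z ^ (a k - 1) * (starRingEnd ℂ z) ^ b k
  set B := (b k : ℂ) * z ^ a k * (starRingEnd ℂ z) ^ (b k - 1)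
  linear_combination (c k * (B - A) / 2) * Complex.I_mul_I

lemma wirtingerDerivBar_sum (s : Finset ℕ) (c : ℕ → ℂ) (a b : ℕ → ℕ) (z : ℂ) :
    wirtingerDerivBar (fun w : ℂ => ∑ k ∈ s, c k * (w ^ a k * (starRingEnd ℂ w) ^ b k)) z
      = ∑ k ∈ s, c k * ((b k : ℂ) * z ^ a k * (starRingEnd ℂ z) ^ (b k - 1)) := by
  unfold wirtingerDerivBar
  rw [fderiv_sum_apply', fderiv_sum_apply', Finset.mul_sum, ← Finset.sum_add_distrib,
    Finset.sum_div]
  refine Finset.sum_congr rfl fun k _ => ?_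
  simp only [Complex.conj_I, map_one]
  set A := (a k : ℂ) * z ^ (a k - 1) * (starRingEnd ℂ z) ^ b k
  set B := (b k : ℂ) * z ^ a k * (starRingEnd ℂ z) ^ (b k - 1)
  linear_combination (c k * (A - B) / 2) * Complex.I_mul_I

lemma zpow_helper (j : ℕ) (z : ℂ) : z * ((j : ℂ) * z ^ (j - 1)) = (j : ℂ) * z ^ j := by
  cases j with
  | zero => simp
  | succ i => rw [pow_succ']; push_cast; ring

lemma coeff_id (m n k : ℕ) (ρ : ℝ) :
    ((k : ℂ) + 1) * ((-1 : ℂ) ^ (k + 1) * (Nat.factorial (k + 1) : ℂ) *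
        (Nat.choose m (k + 1) : ℂ) * (Nat.choose n (k + 1) : ℂ) * (ρ : ℂ) ^ (k + 1))
      = -(ρ : ℂ) * ((-1 : ℂ) ^ k * (Nat.factorial k : ℂ) * (Nat.choose m k : ℂ) *
          (Nat.choose n k : ℂ) * (ρ : ℂ) ^ k) * ((n - k : ℕ) : ℂ) * ((m - k : ℕ) : ℂ) := by
  have h1 : ((Nat.choose m (k + 1) * (k + 1) : ℕ) : ℂ) = ((Nat.choose m k * (m - k) : ℕ) : ℂ) := by
    rw [Nat.choose_succ_right_eq]
  have h2 : ((Nat.choose n (k + 1) * (k + 1) : ℕ) : ℂ) = ((Nat.choose n k * (n - k) : ℕ) : ℂ) := by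
    rw [Nat.choose_succ_right_eq]
  rw [Nat.factorial_succ]
  push_cast at h1 h2 ⊢
  linear_combination ((-1 : ℂ) ^ (k + 1) * (Nat.factorial k : ℂ) * (ρ : ℂ) ^ (k + 1)) *
      (((Nat.choose n (k + 1) : ℂ) * ((k : ℂ) + 1)) * h1
        + ((Nat.choose m k : ℂ) * ((m - k : ℕ) : ℂ)) * h2)

/-- Eigenfunction property for the complex Ornstein–Uhlenbeck operator:
`z·∂_z J_{m,n} − ρ·∂_z ∂_z̄ J_{m,n} = m·J_{m,n}`. -/
theorem complexHermite_OU_eigenfunction (m n : ℕ) (z : ℂ) (ρ : ℝ) :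
    z * wirtingerDeriv (fun w => complexHermite m n w ρ) z
      - (ρ : ℂ) * wirtingerDeriv (fun w => wirtingerDerivBar (fun v => complexHermite m n v ρ) w) z
      = (m : ℂ) * complexHermite m n z ρ := by
  set N := min m n with hN
  set C : ℕ → ℂ := fun k => (-1 : ℂ) ^ k * (Nat.factorial k : ℂ) * (Nat.choose m k : ℂ) *
      (Nat.choose n k : ℂ) * (ρ : ℂ) ^ k with hC
  have hJ : ∀ w : ℂ, complexHermite m n w ρ
      = ∑ k ∈ Finset.range (N + 1), C k * (w ^ (m - k) * (starRingEnd ℂ w) ^ (n - k)) := by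
    intro w
    unfold complexHermite
    exact Finset.sum_congr rfl fun k _ => by rw [hC]; ring
  have hJf : (fun w => complexHermite m n w ρ)
      = fun w => ∑ k ∈ Finset.range (N + 1), C k * (w ^ (m - k) * (starRingEnd ℂ w) ^ (n - k)) :=
    funext hJ
  have hbar : (fun w => wirtingerDerivBar (fun v => complexHermite m n v ρ) w)
      = fun w => ∑ k ∈ Finset.range (N + 1),
          (C k * ((n - k : ℕ) : ℂ)) * (w ^ (m - k) * (starRingEnd ℂ w) ^ (n - k - 1)) := by
    funext w
    rw [hJf, wirtingerDerivBar_sum]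
    exact Finset.sum_congr rfl fun k _ => by ring
  rw [hbar, hJf, wirtingerDeriv_sum, wirtingerDeriv_sum, hJ z]
  set cz := starRingEnd ℂ z with hcz
  have hA : z * ∑ k ∈ Finset.range (N + 1),
        C k * (((m - k : ℕ) : ℂ) * z ^ (m - k - 1) * cz ^ (n - k))
      = ∑ k ∈ Finset.range (N + 1),
        ((m - k : ℕ) : ℂ) * C k * (z ^ (m - k) * cz ^ (n - k)) := by
    rw [Finset.mul_sum]
    refine Finset.sum_congr rfl fun k _ => ?_
    linear_combination (C k * cz ^ (n - k)) * zpow_helper (m - k) z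
  rw [hA]
  have hM : (m : ℂ) * ∑ k ∈ Finset.range (N + 1), C k * (z ^ (m - k) * cz ^ (n - k))
      = ∑ k ∈ Finset.range (N + 1), ((m - k : ℕ) : ℂ) * C k * (z ^ (m - k) * cz ^ (n - k))
        + ∑ k ∈ Finset.range (N + 1), (k : ℂ) * C k * (z ^ (m - k) * cz ^ (n - k)) := by
    rw [Finset.mul_sum, ← Finset.sum_add_distrib]
    refine Finset.sum_congr rfl fun k hk => ?_
    have hkm : k ≤ m := by
      have := Finset.mem_range.mp hk
      omega
    rw [Nat.cast_sub hkm]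
    ring
  rw [hM]
  rw [sub_eq_iff_eq_add, add_assoc, left_eq_add]
  have hT1 : ∑ k ∈ Finset.range (N + 1), (k : ℂ) * C k * (z ^ (m - k) * cz ^ (n - k))
      = ∑ k ∈ Finset.range N,
          ((k + 1 : ℕ) : ℂ) * C (k + 1) * (z ^ (m - (k + 1)) * cz ^ (n - (k + 1))) := by
    rw [Finset.sum_range_succ']
    simp
  have hT2 : ∑ k ∈ Finset.range (N + 1),
        C k * ((n - k : ℕ) : ℂ) * (((m - k : ℕ) : ℂ) * z ^ (m - k - 1) * cz ^ (n - k - 1))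
      = ∑ k ∈ Finset.range N,
        C k * ((n - k : ℕ) : ℂ) * (((m - k : ℕ) : ℂ) * z ^ (m - k - 1) * cz ^ (n - k - 1)) := by
    rw [Finset.sum_range_succ]
    have h0 : m - N = 0 ∨ n - N = 0 := by omega
    rcases h0 with h | h <;> simp [h]
  rw [hT1, hT2, Finset.mul_sum, ← Finset.sum_add_distrib]
  refine Finset.sum_eq_zero fun k hk => ?_
  have e1 : m - (k + 1) = m - k - 1 := by omega
  have e2 : n - (k + 1) = n - k - 1 := by omega
  rw [e1, e2]
  simp only [hC]
  push_cast
  linear_combination (z ^ (m - k - 1) * cz ^ (n - k - 1)) * coeff_id m n k ρ
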